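/- If x ≥ 2, q ≥ 1, and n ≥ x²q(q+2), then the number of multisets S = {V₁,...,V_q} of x-element subsets of [n] such that for every j there exists i ≠ j with |V_i ∩ V_j| ≥ 2 is at most 2·n^{xq−q}·(x²/x!)^q. -/

import Mathlib

open Finset

namespace CIM

/-- tree ordering property for tuples -/
def TreeProp (n k : ℕ) (T : Fin k → Finset (Fin n)) : Prop :=
  ∀ j : Fin k, (j : ℕ) ≠ 0 → ∃ i : Fin k, (i : ℕ) < (j : ℕ) ∧ 2 ≤ (T i ∩ T j).card

/-- tree ordering property for lists -/
def TreeList (n : ℕ) (l : List (Finset (Fin n))) : Prop :=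
  ∀ j, (hj : j < l.length) → j ≠ 0 →
    ∃ i, ∃ (hi : i < l.length), i < j ∧ 2 ≤ (l[i] ∩ l[j]).card

def PP (n : ℕ) (S : Multiset (Finset (Fin n))) : Prop :=
  ∀ V ∈ S, ∃ W ∈ S.erase V, 2 ≤ (V ∩ W).card

lemma treeList_append {n : ℕ} {l : List (Finset (Fin n))} {V U : Finset (Fin n)}
    (hT : TreeList n l) (hU : U ∈ l) (hUV : 2 ≤ (U ∩ V).card) :
    TreeList n (l ++ [V]) := by
  intro j hj hj0
  have hlen : (l ++ [V]).length = l.length + 1 := by simp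
  rcases lt_or_ge j l.length with hjl | hjl
  · obtain ⟨i, hi, hij, hcard⟩ := hT j hjl hj0
    refine ⟨i, by simp [hlen]; omega, hij, ?_⟩
    rwa [List.getElem_append_left (by omega), List.getElem_append_left hjl]
  · have hjeq : j = l.length := by omega
    obtain ⟨i, hi, hiU⟩ := List.mem_iff_getElem.1 hU
    refine ⟨i, by simp [hlen]; omega, by omega, ?_⟩
    have h2 : (l ++ [V])[j] = V := by
      rw [List.getElem_append_right hjl, List.getElem_singleton]
    have h1 : (l ++ [V])[i]'(by simp [hlen]; omega) = U := by
      rw [List.getElem_append_left hi]; exact hiU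
    rw [h1, h2]; exact hUV

lemma loop (n : ℕ) (R : Multiset (Finset (Fin n))) :
    ∀ (l : List (Finset (Fin n))), TreeList n l →
    ∃ (l' : List (Finset (Fin n))) (R' : Multiset (Finset (Fin n))),
      (l' : Multiset (Finset (Fin n))) + R' = (l : Multiset (Finset (Fin n))) + R ∧
      TreeList n l' ∧ l.length ≤ l'.length ∧
      ∀ V ∈ R', ∀ U ∈ l', ¬ 2 ≤ (V ∩ U).card := by
  induction R using Multiset.strongInductionOn with
  | _ R ih =>
    intro l hT
    by_cases h : ∃ V ∈ R, ∃ U ∈ l, 2 ≤ (V ∩ U).card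
    · obtain ⟨V, hVR, U, hUl, hUV⟩ := h
      obtain ⟨l', R', heq, hT', hlen, hstop⟩ :=
        ih (R.erase V) (Multiset.erase_lt.2 hVR) (l ++ [V])
          (treeList_append hT hUl (by rwa [Finset.inter_comm]))
      refine ⟨l', R', ?_, hT', ?_, hstop⟩
      · rw [heq]
        have : ((l ++ [V] : List (Finset (Fin n))) : Multiset (Finset (Fin n)))
            = (l : Multiset (Finset (Fin n))) + {V} := by
          rw [← Multiset.coe_add, Multiset.coe_singleton]
        rw [this, add_assoc, Multiset.singleton_add, Multiset.cons_erase hVR]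
      · calc l.length ≤ (l ++ [V]).length := by simp
          _ ≤ l'.length := hlen
    · push_neg at h
      exact ⟨l, R, rfl, hT, le_refl _, fun V hV U hU => by
        intro hc; have := h V hV U hU; omega⟩


lemma exists_decomp (n : ℕ) (S : Multiset (Finset (Fin n))) (hS : S ≠ 0) (hP : PP n S) :
    ∃ (l : List (Finset (Fin n))) (S₂ : Multiset (Finset (Fin n))),
      2 ≤ l.length ∧ (l : Multiset (Finset (Fin n))) + S₂ = S ∧ TreeList n l ∧ PP n S₂ := by
  obtain ⟨V₀, hV₀⟩ := Multiset.exists_mem_of_ne_zero hS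
  obtain ⟨W₀, hW₀, hVW⟩ := hP V₀ hV₀
  have hsum : (([V₀, W₀] : List (Finset (Fin n))) : Multiset (Finset (Fin n)))
      + (S.erase V₀).erase W₀ = S := by
    have : (([V₀, W₀] : List (Finset (Fin n))) : Multiset (Finset (Fin n)))
        = V₀ ::ₘ W₀ ::ₘ 0 := rfl
    rw [this]
    simp only [Multiset.cons_add, zero_add]
    rw [Multiset.cons_erase hW₀, Multiset.cons_erase hV₀]
  have hT0 : TreeList n [V₀, W₀] := by
    intro j hj hj0
    have hj1 : j = 1 := by simp at hj; omega
    subst hj1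
    exact ⟨0, by simp, by omega, hVW⟩
  obtain ⟨l', R', heq, hT', hlen, hstop⟩ := loop n ((S.erase V₀).erase W₀) [V₀, W₀] hT0
  have hSeq : (l' : Multiset (Finset (Fin n))) + R' = S := by rw [heq, hsum]
  refine ⟨l', R', by simpa using hlen, hSeq, hT', ?_⟩
  intro V hV
  have hVS : V ∈ S := by rw [← hSeq]; exact Multiset.mem_add.2 (Or.inr hV)
  obtain ⟨W, hW, hWo⟩ := hP V hVS
  have herase : S.erase V = (l' : Multiset (Finset (Fin n))) + R'.erase V := by
    rw [← hSeq]; exact Multiset.erase_add_right_pos _ hV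
  rw [herase] at hW
  rcases Multiset.mem_add.1 hW with hWl | hWr
  · exact absurd hWo (hstop V hV W (Multiset.mem_coe.1 hWl))
  · exact ⟨W, hWr, hWo⟩


def Good (n x q : ℕ) (S : Multiset (Finset (Fin n))) : Prop :=
  Multiset.card S = q ∧ (∀ V ∈ S, V.card = x) ∧
    ∀ V ∈ S, ∃ W ∈ S.erase V, 2 ≤ (V ∩ W).card

def TT (n x k : ℕ) : Type :=
  {T : Fin k → Finset (Fin n) // (∀ j, (T j).card = x) ∧ TreeProp n k T}

instance finTT (n x k : ℕ) : Finite (TT n x k) :=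
  Subtype.finite

instance finGood (n x q : ℕ) : Finite {S : Multiset (Finset (Fin n)) // Good n x q S} := by
  haveI h : Finite {s : Multiset (Finset (Fin n)) // Multiset.card s = q} :=
    (inferInstance : Finite (Sym (Finset (Fin n)) q))
  exact Finite.of_injective
    (fun (S : {S : Multiset (Finset (Fin n)) // Good n x q S}) =>
      (⟨S.1, S.2.1⟩ : {s : Multiset (Finset (Fin n)) // Multiset.card s = q}))
    (by
      intro a b hab
      exact Subtype.ext (congrArg
        (fun (z : {s : Multiset (Finset (Fin n)) // Multiset.card s = q}) => z.1) hab))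

lemma nat_card_sigma {ι : Type*} [Fintype ι] (α : ι → Type*) [∀ i, Finite (α i)] :
    Nat.card (Σ i, α i) = ∑ i, Nat.card (α i) := by
  letI : ∀ i, Fintype (α i) := fun i => Fintype.ofFinite _
  simp only [Nat.card_eq_fintype_card]
  exact Fintype.card_sigma

lemma step (n x q : ℕ) (hq : 1 ≤ q) :
    Nat.card {S : Multiset (Finset (Fin n)) // Good n x q S} ≤
      ∑ k ∈ Finset.Icc 2 q, Nat.card (TT n x k) *
        Nat.card {S : Multiset (Finset (Fin n)) // Good n x (q - k) S} := by
  classical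
  have key : ∀ S : {S : Multiset (Finset (Fin n)) // Good n x q S},
      ∃ g : (Σ k : (Finset.Icc 2 q : Finset ℕ), TT n x k.1 ×
          {S : Multiset (Finset (Fin n)) // Good n x (q - k.1) S}),
        ((List.ofFn g.2.1.1 : List (Finset (Fin n))) : Multiset (Finset (Fin n)))
          + g.2.2.1 = S.1 := by
    rintro ⟨S, hc, hsz, hP⟩
    have hS0 : S ≠ 0 := by
      intro h; rw [h] at hc; simp at hc; omega
    obtain ⟨l, S₂, hl2, hsum, hT, hP₂⟩ := exists_decomp n S hS0 hP
    have hcard : l.length + Multiset.card S₂ = q := by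
      rw [← hc, ← hsum, Multiset.card_add, Multiset.coe_card]
    have hmem : ∀ W ∈ l, W ∈ S := by
      intro W hW
      rw [← hsum]; exact Multiset.mem_add.2 (Or.inl (Multiset.mem_coe.2 hW))
    have hmem₂ : ∀ W ∈ S₂, W ∈ S := by
      intro W hW
      rw [← hsum]; exact Multiset.mem_add.2 (Or.inr hW)
    have hGood₂ : Good n x (q - l.length) S₂ :=
      ⟨by omega, fun V hV => hsz V (hmem₂ V hV), hP₂⟩
    refine ⟨⟨⟨l.length, by simp [Finset.mem_Icc]; omega⟩,
      ⟨fun i => l[(i : ℕ)], fun j => hsz _ (hmem _ (l.getElem_mem _)), ?_⟩,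
      ⟨S₂, hGood₂⟩⟩, ?_⟩
    · intro j hj0
      obtain ⟨i, hi, hij, hc2⟩ := hT (j : ℕ) j.isLt hj0
      exact ⟨⟨i, hi⟩, hij, hc2⟩
    · show ((List.ofFn (fun i : Fin l.length => l[(i : ℕ)]) : List (Finset (Fin n)))
          : Multiset (Finset (Fin n))) + S₂ = S
      rw [List.ofFn_getElem (xs := l)]
      exact hsum
  set Tgt := (Σ k : (Finset.Icc 2 q : Finset ℕ), TT n x k.1 ×
      {S : Multiset (Finset (Fin n)) // Good n x (q - k.1) S}) with hTgt
  letI : ∀ k : (Finset.Icc 2 q : Finset ℕ), Fintype (TT n x k.1 ×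
      {S : Multiset (Finset (Fin n)) // Good n x (q - k.1) S}) := fun k => Fintype.ofFinite _
  have hinj : Function.Injective
      (fun (S : {S : Multiset (Finset (Fin n)) // Good n x q S}) => (key S).choose) := by
    intro a b hab
    have ha := (key a).choose_spec
    have hb := (key b).choose_spec
    have hab2 : (key a).choose = (key b).choose := hab
    apply Subtype.ext
    rw [← ha, ← hb, hab2]
  refine le_trans (Nat.card_le_card_of_injective _ hinj) (le_of_eq ?_)
  rw [nat_card_sigma]
  rw [← Finset.sum_coe_sort (Finset.Icc 2 q)
    (fun k => Nat.card (TT n x k) * Nat.card {S : Multiset (Finset (Fin n)) // Good n x (q - k) S})]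
  exact Finset.sum_congr rfl (fun k _ => Nat.card_prod _ _)


lemma tt_one (n x : ℕ) : Nat.card (TT n x 1) ≤ n.choose x := by
  classical
  have h : Nat.card {V : Finset (Fin n) // V.card = x} = n.choose x := by
    rw [Nat.card_eq_fintype_card, Fintype.card_finset_len, Fintype.card_fin]
  rw [← h]
  apply Nat.card_le_card_of_injective
    (fun (T : TT n x 1) => (⟨T.1 0, T.2.1 0⟩ : {V : Finset (Fin n) // V.card = x}))
  intro a b hab
  have h0 : a.1 0 = b.1 0 := congrArg
    (fun (z : {V : Finset (Fin n) // V.card = x}) => z.1) hab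
  apply Subtype.ext
  funext i
  have : i = 0 := Subsingleton.elim _ _
  rw [this]; exact h0

lemma tt_succ (n x k : ℕ) (hx : 2 ≤ x) (hk : 1 ≤ k) :
    Nat.card (TT n x (k + 1)) ≤
      Nat.card (TT n x k) * (k * (x.choose 2 * n.choose (x - 2))) := by
  classical
  have key : ∀ T : TT n x (k + 1), ∃ g : (Σ (T' : TT n x k), (Σ (i : Fin k),
      ({P : Finset (Fin n) // P ∈ (T'.1 i).powersetCard 2} ×
       {Z : Finset (Fin n) // Z ∈ (Finset.univ : Finset (Fin n)).powersetCard (x - 2)}))),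
      Fin.snoc g.1.1 (g.2.2.1.1 ∪ g.2.2.2.1) = T.1 := by
    rintro ⟨f, hsz, hTree⟩
    have hinit : TreeProp n k (fun i : Fin k => f i.castSucc) := by
      intro j hj0
      obtain ⟨i, hij, hc⟩ := hTree j.castSucc (by simpa using hj0)
      have hij' : (i : ℕ) < (j : ℕ) := by simpa using hij
      have hik : (i : ℕ) < k := lt_trans hij' j.isLt
      refine ⟨⟨(i : ℕ), hik⟩, by simpa using hij', ?_⟩
      have hieq : i = Fin.castSucc ⟨(i : ℕ), hik⟩ := Fin.ext (by simp)
      dsimp only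
      rw [← hieq]
      exact hc
    obtain ⟨i, hik0, hc⟩ := hTree (Fin.last k) (by simp; omega)
    have hik : (i : ℕ) < k := by simpa using hik0
    have hieq : i = Fin.castSucc ⟨(i : ℕ), hik⟩ := Fin.ext (by simp)
    obtain ⟨P, hPsub, hPcard⟩ := Finset.exists_subset_card_eq hc
    have hPV : P ⊆ f (Fin.last k) := hPsub.trans Finset.inter_subset_right
    have hPfi : P ⊆ f i := hPsub.trans Finset.inter_subset_left
    refine ⟨⟨⟨fun i => f i.castSucc, fun j => hsz _, hinit⟩, ⟨(i : ℕ), hik⟩,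
      ⟨P, ?_⟩, ⟨f (Fin.last k) \ P, ?_⟩⟩, ?_⟩
    · rw [Finset.mem_powersetCard]
      refine ⟨?_, hPcard⟩
      dsimp only
      rw [← hieq]
      exact hPfi
    · rw [Finset.mem_powersetCard]
      refine ⟨Finset.subset_univ _, ?_⟩
      rw [Finset.card_sdiff_of_subset hPV, hsz, hPcard]
    · show Fin.snoc (fun i : Fin k => f i.castSucc)
        (P ∪ (f (Fin.last k) \ P)) = f
      rw [Finset.union_sdiff_of_subset hPV]
      exact Fin.snoc_init_self f
  have hinj : Function.Injective (fun (T : TT n x (k + 1)) => (key T).choose) := by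
    intro a b hab
    have ha := (key a).choose_spec
    have hb := (key b).choose_spec
    have hab2 : (key a).choose = (key b).choose := hab
    apply Subtype.ext
    rw [← ha, ← hb, hab2]
  refine le_trans (Nat.card_le_card_of_injective _ hinj) (le_of_eq ?_)
  letI : Fintype (TT n x k) := Fintype.ofFinite _
  rw [nat_card_sigma]
  have hfib : ∀ T : TT n x k, Nat.card (Σ (i : Fin k),
      ({P : Finset (Fin n) // P ∈ (T.1 i).powersetCard 2} ×
       {Z : Finset (Fin n) // Z ∈ (Finset.univ : Finset (Fin n)).powersetCard (x - 2)}))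
      = k * (x.choose 2 * n.choose (x - 2)) := by
    intro T
    rw [nat_card_sigma]
    have hone : ∀ i : Fin k,
        Nat.card ({P : Finset (Fin n) // P ∈ (T.1 i).powersetCard 2} ×
         {Z : Finset (Fin n) // Z ∈ (Finset.univ : Finset (Fin n)).powersetCard (x - 2)})
        = x.choose 2 * n.choose (x - 2) := by
      intro i
      rw [Nat.card_prod]
      have h1 : Nat.card {P : Finset (Fin n) // P ∈ (T.1 i).powersetCard 2} = x.choose 2 :=
        (Nat.card_eq_finsetCard ((T.1 i).powersetCard 2)).trans
          (by rw [Finset.card_powersetCard, T.2.1 i])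
      have h2 : Nat.card {Z : Finset (Fin n) // Z ∈
          (Finset.univ : Finset (Fin n)).powersetCard (x - 2)} = n.choose (x - 2) :=
        (Nat.card_eq_finsetCard _).trans
          (by rw [Finset.card_powersetCard, Finset.card_univ, Fintype.card_fin])
      rw [h1, h2]
    rw [Finset.sum_congr rfl (fun i _ => hone i)]
    simp [Finset.sum_const, Finset.card_univ, mul_comm]
  rw [Finset.sum_congr rfl (fun T _ => hfib T)]
  rw [Finset.sum_const, Finset.card_univ, smul_eq_mul, Nat.card_eq_fintype_card]

lemma tt_bound (n x : ℕ) (hx : 2 ≤ x) : ∀ m : ℕ,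
    Nat.card (TT n x (m + 1)) ≤
      m.factorial * n.choose x * (x.choose 2 * n.choose (x - 2)) ^ m := by
  intro m
  induction m with
  | zero => simpa using tt_one n x
  | succ m ih =>
    calc Nat.card (TT n x (m + 1 + 1))
        ≤ Nat.card (TT n x (m + 1)) * ((m + 1) * (x.choose 2 * n.choose (x - 2))) :=
          tt_succ n x (m + 1) hx (by omega)
      _ ≤ (m.factorial * n.choose x * (x.choose 2 * n.choose (x - 2)) ^ m) *
          ((m + 1) * (x.choose 2 * n.choose (x - 2))) :=
          Nat.mul_le_mul_right _ ih
      _ = (m + 1).factorial * n.choose x * (x.choose 2 * n.choose (x - 2)) ^ (m + 1) := by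
          rw [Nat.factorial_succ]; ring


lemma fact_le (q : ℕ) : ∀ k, 2 ≤ k → k ≤ q → (k - 1).factorial ≤ (q * (q + 2)) ^ (k - 2) := by
  intro k
  induction k with
  | zero => intro h; omega
  | succ k ih =>
    intro h2 hq
    rcases Nat.lt_or_ge k 2 with hk | hk
    · have hk1 : k = 1 := by omega
      subst hk1
      simp
    · have ih' := ih hk (by omega)
      have hfs : ∃ m, k = m + 1 := ⟨k - 1, by omega⟩
      obtain ⟨m, rfl⟩ := hfs
      have hstep : (m + 1).factorial = (m + 1) * m.factorial := Nat.factorial_succ m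
      calc (m + 1 + 1 - 1).factorial = (m + 1) * m.factorial := hstep
        _ ≤ (q * (q + 2)) * (q * (q + 2)) ^ (m + 1 - 2) := by
            apply Nat.mul_le_mul _ ih'
            calc m + 1 ≤ q := by omega
              _ ≤ q * (q + 2) := Nat.le_mul_of_pos_right q (by omega)
        _ = (q * (q + 2)) ^ (m + 1 - 2 + 1) := (pow_succ' _ _).symm
        _ = (q * (q + 2)) ^ (m + 1 + 1 - 2) := by congr 1; omega

lemma star (n x q k : ℕ) (hx : 2 ≤ x) (hk2 : 2 ≤ k) (hkq : k ≤ q)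
    (hn : x ^ 2 * q * (q + 2) ≤ n) :
    2 ^ (k - 1) * ((k - 1).factorial * n.choose x * (x.choose 2 * n.choose (x - 2)) ^ (k - 1)) *
      x.factorial ^ k ≤ n ^ ((x - 1) * k) * x ^ (2 * k) := by
  obtain ⟨a, rfl⟩ : ∃ a, x = a + 2 := ⟨x - 2, by omega⟩
  obtain ⟨b, rfl⟩ : ∃ b, k = b + 2 := ⟨k - 2, by omega⟩
  have e1 : a + 2 - 2 = a := rfl
  have e2 : b + 2 - 1 = b + 1 := rfl
  have e3 : a + 2 - 1 = a + 1 := rfl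
  rw [e1, e2, e3]
  have hfac : (a + 2).factorial = (a + 2) * (a + 1) * a.factorial := by
    rw [Nat.factorial_succ, Nat.factorial_succ]; ring
  have F1 : n.choose (a + 2) * (a + 2).factorial ≤ n ^ (a + 2) := by
    have h := Nat.descFactorial_le_pow n (a + 2)
    rw [Nat.descFactorial_eq_factorial_mul_choose] at h
    calc n.choose (a + 2) * (a + 2).factorial = (a + 2).factorial * n.choose (a + 2) := by ring
      _ ≤ n ^ (a + 2) := h
  have hna : n.choose a * a.factorial ≤ n ^ a := by
    have h := Nat.descFactorial_le_pow n a
    rw [Nat.descFactorial_eq_factorial_mul_choose] at h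
    calc n.choose a * a.factorial = a.factorial * n.choose a := by ring
      _ ≤ n ^ a := h
  have hC2eq : 2 * (a + 2).choose 2 = (a + 2) * (a + 1) := by
    have Fc := Nat.choose_mul_factorial_mul_factorial (show 2 ≤ a + 2 by omega)
    rw [e1, Nat.factorial_two] at Fc
    apply Nat.eq_of_mul_eq_mul_right (Nat.factorial_pos a)
    calc 2 * (a + 2).choose 2 * a.factorial = (a + 2).choose 2 * 2 * a.factorial := by ring
      _ = (a + 2).factorial := Fc
      _ = (a + 2) * (a + 1) * a.factorial := hfac
  have C2 : 2 * ((a + 2).choose 2 * n.choose a) * (a + 2).factorial ≤ (a + 2) ^ 4 * n ^ a := by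
    calc 2 * ((a + 2).choose 2 * n.choose a) * (a + 2).factorial
        = (2 * (a + 2).choose 2) * ((a + 2) * (a + 1)) * (n.choose a * a.factorial) := by
          rw [hfac]; ring
      _ = ((a + 2) * (a + 1)) * ((a + 2) * (a + 1)) * (n.choose a * a.factorial) := by
          rw [hC2eq]
      _ ≤ ((a + 2) * (a + 2)) * ((a + 2) * (a + 2)) * n ^ a := by
          apply Nat.mul_le_mul _ hna
          apply Nat.mul_le_mul <;>
            exact Nat.mul_le_mul (le_refl _) (by omega)
      _ = (a + 2) ^ 4 * n ^ a := by ring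
  have F3 : (b + 1).factorial * ((a + 2) ^ 2) ^ b ≤ n ^ b := by
    have hf := fact_le q (b + 2) (by omega) hkq
    rw [e2, (by rfl : b + 2 - 2 = b)] at hf
    calc (b + 1).factorial * ((a + 2) ^ 2) ^ b
        ≤ (q * (q + 2)) ^ b * ((a + 2) ^ 2) ^ b := Nat.mul_le_mul_right _ hf
      _ = ((a + 2) ^ 2 * q * (q + 2)) ^ b := by
          rw [← Nat.mul_pow]; congr 1; ring
      _ ≤ n ^ b := Nat.pow_le_pow_left hn b
  obtain ⟨y, hy⟩ : ∃ y, y = a + 2 := ⟨a + 2, rfl⟩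
  rw [← hy] at F1 C2 F3 ⊢
  calc 2 ^ (b + 1) * ((b + 1).factorial * n.choose y *
        (y.choose 2 * n.choose a) ^ (b + 1)) * y.factorial ^ (b + 2)
      = (b + 1).factorial * (n.choose y * y.factorial) *
          (2 * (y.choose 2 * n.choose a) * y.factorial) ^ (b + 1) := by ring
    _ ≤ (b + 1).factorial * n ^ y * (y ^ 4 * n ^ a) ^ (b + 1) := by
        exact Nat.mul_le_mul (Nat.mul_le_mul_left _ F1) (Nat.pow_le_pow_left C2 _)
    _ = ((b + 1).factorial * (y ^ 2) ^ b) *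
          (n ^ y * (n ^ a) ^ (b + 1) * y ^ (2 * b + 4)) := by ring
    _ ≤ n ^ b * (n ^ y * (n ^ a) ^ (b + 1) * y ^ (2 * b + 4)) :=
        Nat.mul_le_mul_right _ F3
    _ = n ^ ((a + 1) * (b + 2)) * y ^ (2 * (b + 2)) := by
        rw [hy, ← pow_mul]
        have e4 : (a + 1) * (b + 2) = b + ((a + 2) + a * (b + 1)) := by ring
        have e5 : 2 * (b + 2) = 2 * b + 4 := by ring
        rw [e4, e5, pow_add, pow_add]
        ring


lemma good_zero (n x : ℕ) : Nat.card {S : Multiset (Finset (Fin n)) // Good n x 0 S} ≤ 1 := by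
  haveI : Subsingleton {S : Multiset (Finset (Fin n)) // Good n x 0 S} := by
    constructor
    rintro ⟨S, hS⟩ ⟨S', hS'⟩
    apply Subtype.ext
    show S = S'
    rw [Multiset.card_eq_zero.1 hS.1, Multiset.card_eq_zero.1 hS'.1]
  have h := Nat.card_le_card_of_injective
    (fun (_ : {S : Multiset (Finset (Fin n)) // Good n x 0 S}) => (PUnit.unit : PUnit.{1}))
    (fun a b _ => Subsingleton.elim a b)
  simpa using h

lemma good_one (n x : ℕ) : Nat.card {S : Multiset (Finset (Fin n)) // Good n x 1 S} = 0 := by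
  haveI : IsEmpty {S : Multiset (Finset (Fin n)) // Good n x 1 S} := by
    constructor
    rintro ⟨S, hc, -, hP⟩
    obtain ⟨V, rfl⟩ := Multiset.card_eq_one.1 hc
    obtain ⟨W, hW, -⟩ := hP V (Multiset.mem_singleton_self V)
    rw [Multiset.erase_singleton] at hW
    exact Multiset.notMem_zero W hW
  exact Nat.card_of_isEmpty

lemma geom_bound (q : ℕ) : ∑ k ∈ Finset.Icc 2 q, ((1 : ℝ) / 2) ^ (k - 1) ≤ 1 := by
  rw [← Finset.Ico_add_one_right_eq_Icc, Finset.sum_Ico_eq_sum_range]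
  have h1 : ∀ i ∈ Finset.range (q + 1 - 2), ((1 : ℝ) / 2) ^ (2 + i - 1)
      = ((1 : ℝ) / 2) ^ i * (1 / 2) := by
    intro i _
    have : 2 + i - 1 = i + 1 := by omega
    rw [this, pow_succ]
  rw [Finset.sum_congr rfl h1, ← Finset.sum_mul]
  have h2 := sum_geometric_two_le (q + 1 - 2)
  nlinarith [h2]

lemma main (n x : ℕ) (hx : 2 ≤ x) : ∀ q : ℕ, x ^ 2 * q * (q + 2) ≤ n →
    (Nat.card {S : Multiset (Finset (Fin n)) // Good n x q S} : ℝ) * (x.factorial : ℝ) ^ q ≤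
      2 * (n : ℝ) ^ ((x - 1) * q) * (x : ℝ) ^ (2 * q) := by
  intro q
  induction q using Nat.strong_induction_on with
  | _ q ih =>
    intro hn
    rcases Nat.lt_or_ge q 2 with hq2 | hq2
    · interval_cases q
      · have h0 : (Nat.card {S : Multiset (Finset (Fin n)) // Good n x 0 S} : ℝ) ≤ 1 := by
          exact_mod_cast good_zero n x
        simp only [pow_zero, mul_zero, Nat.mul_zero, mul_one]
        linarith
      · rw [good_one n x]
        have : (0:ℝ) ≤ 2 * (n : ℝ) ^ ((x - 1) * 1) * (x : ℝ) ^ (2 * 1) := by positivity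
        simpa using this
    · have hstep := step n x q (by omega)
      have hcast : (Nat.card {S : Multiset (Finset (Fin n)) // Good n x q S} : ℝ) ≤
          ∑ k ∈ Finset.Icc 2 q, (Nat.card (TT n x k) : ℝ) *
            (Nat.card {S : Multiset (Finset (Fin n)) // Good n x (q - k) S} : ℝ) := by
        exact_mod_cast hstep
      have hfnon : (0:ℝ) ≤ (x.factorial : ℝ) ^ q := by positivity
      calc (Nat.card {S : Multiset (Finset (Fin n)) // Good n x q S} : ℝ) * (x.factorial : ℝ) ^ q
          ≤ (∑ k ∈ Finset.Icc 2 q, (Nat.card (TT n x k) : ℝ) *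
              (Nat.card {S : Multiset (Finset (Fin n)) // Good n x (q - k) S} : ℝ)) *
              (x.factorial : ℝ) ^ q := mul_le_mul_of_nonneg_right hcast hfnon
        _ = ∑ k ∈ Finset.Icc 2 q, ((Nat.card (TT n x k) : ℝ) * (x.factorial : ℝ) ^ k) *
              ((Nat.card {S : Multiset (Finset (Fin n)) // Good n x (q - k) S} : ℝ) *
                (x.factorial : ℝ) ^ (q - k)) := by
            rw [Finset.sum_mul]
            apply Finset.sum_congr rfl
            intro k hk
            have hkq : k ≤ q := (Finset.mem_Icc.1 hk).2
            have hqe : (x.factorial : ℝ) ^ q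
                = (x.factorial : ℝ) ^ k * (x.factorial : ℝ) ^ (q - k) := by
              rw [← pow_add]; congr 1; omega
            rw [hqe]; ring
        _ ≤ ∑ k ∈ Finset.Icc 2 q, (2 * (n : ℝ) ^ ((x - 1) * q) * (x : ℝ) ^ (2 * q)) *
              ((1 : ℝ) / 2) ^ (k - 1) := by
            apply Finset.sum_le_sum
            intro k hk
            obtain ⟨hk2, hkq⟩ := Finset.mem_Icc.1 hk
            -- natural-number bound for the tree count
            have ht := tt_bound n x hx (k - 1)
            rw [(by omega : k - 1 + 1 = k)] at ht
            have hs := star n x q k hx hk2 hkq hn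
            have hNat : 2 ^ (k - 1) * (Nat.card (TT n x k) * x.factorial ^ k) ≤
                n ^ ((x - 1) * k) * x ^ (2 * k) := by
              calc 2 ^ (k - 1) * (Nat.card (TT n x k) * x.factorial ^ k)
                  ≤ 2 ^ (k - 1) * (((k - 1).factorial * n.choose x *
                      (x.choose 2 * n.choose (x - 2)) ^ (k - 1)) * x.factorial ^ k) :=
                    Nat.mul_le_mul_left _ (Nat.mul_le_mul_right _ ht)
                _ = 2 ^ (k - 1) * ((k - 1).factorial * n.choose x *
                      (x.choose 2 * n.choose (x - 2)) ^ (k - 1)) * x.factorial ^ k := by ring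
                _ ≤ n ^ ((x - 1) * k) * x ^ (2 * k) := hs
            have hAr : (2:ℝ) ^ (k - 1) * ((Nat.card (TT n x k) : ℝ) * (x.factorial : ℝ) ^ k) ≤
                (n : ℝ) ^ ((x - 1) * k) * (x : ℝ) ^ (2 * k) := by
              exact_mod_cast hNat
            have hone : ((2:ℝ)) ^ (k - 1) * ((1 : ℝ) / 2) ^ (k - 1) = 1 := by
              rw [← mul_pow]; norm_num
            have hA : (Nat.card (TT n x k) : ℝ) * (x.factorial : ℝ) ^ k ≤
                ((n : ℝ) ^ ((x - 1) * k) * (x : ℝ) ^ (2 * k)) * ((1 : ℝ) / 2) ^ (k - 1) := by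
              calc (Nat.card (TT n x k) : ℝ) * (x.factorial : ℝ) ^ k
                  = ((Nat.card (TT n x k) : ℝ) * (x.factorial : ℝ) ^ k) *
                      ((2:ℝ) ^ (k - 1) * ((1 : ℝ) / 2) ^ (k - 1)) := by rw [hone, mul_one]
                _ = ((2:ℝ) ^ (k - 1) * ((Nat.card (TT n x k) : ℝ) * (x.factorial : ℝ) ^ k)) *
                      ((1 : ℝ) / 2) ^ (k - 1) := by ring
                _ ≤ ((n : ℝ) ^ ((x - 1) * k) * (x : ℝ) ^ (2 * k)) * ((1 : ℝ) / 2) ^ (k - 1) :=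
                    mul_le_mul_of_nonneg_right hAr (by positivity)
            have hB : (Nat.card {S : Multiset (Finset (Fin n)) // Good n x (q - k) S} : ℝ) *
                (x.factorial : ℝ) ^ (q - k) ≤
                2 * (n : ℝ) ^ ((x - 1) * (q - k)) * (x : ℝ) ^ (2 * (q - k)) := by
              apply ih (q - k) (by omega)
              calc x ^ 2 * (q - k) * ((q - k) + 2)
                  ≤ x ^ 2 * q * (q + 2) :=
                    Nat.mul_le_mul (Nat.mul_le_mul_left _ (by omega)) (by omega)
                _ ≤ n := hn
            calc ((Nat.card (TT n x k) : ℝ) * (x.factorial : ℝ) ^ k) *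
                  ((Nat.card {S : Multiset (Finset (Fin n)) // Good n x (q - k) S} : ℝ) *
                    (x.factorial : ℝ) ^ (q - k))
                ≤ (((n : ℝ) ^ ((x - 1) * k) * (x : ℝ) ^ (2 * k)) * ((1 : ℝ) / 2) ^ (k - 1)) *
                  (2 * (n : ℝ) ^ ((x - 1) * (q - k)) * (x : ℝ) ^ (2 * (q - k))) := by
                  apply mul_le_mul hA hB (by positivity) (by positivity)
              _ = (2 * (n : ℝ) ^ ((x - 1) * q) * (x : ℝ) ^ (2 * q)) * ((1 : ℝ) / 2) ^ (k - 1) := by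
                  have e6 : (x - 1) * q = (x - 1) * k + (x - 1) * (q - k) := by
                    rw [← Nat.mul_add]; congr 1; omega
                  have e7 : 2 * q = 2 * k + 2 * (q - k) := by omega
                  rw [e6, e7, pow_add, pow_add]; ring
        _ = (2 * (n : ℝ) ^ ((x - 1) * q) * (x : ℝ) ^ (2 * q)) *
              ∑ k ∈ Finset.Icc 2 q, ((1 : ℝ) / 2) ^ (k - 1) := by rw [← Finset.mul_sum]
        _ ≤ (2 * (n : ℝ) ^ ((x - 1) * q) * (x : ℝ) ^ (2 * q)) * 1 := by
            apply mul_le_mul_of_nonneg_left (geom_bound q) (by positivity)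
        _ = 2 * (n : ℝ) ^ ((x - 1) * q) * (x : ℝ) ^ (2 * q) := mul_one _

end CIM
/-- Lemma: if `x ≥ 2`, `q ≥ 1` and `n ≥ x²q(q+2)`, then the number of
multisets `S = {V₁,…,V_q}` of `x`-element subsets of `[n]` such that every
member shares at least `2` elements with some other member is at most
`2·n^{xq−q}·(x²/x!)^q`. -/
theorem count_intersecting_multisets (n x q : ℕ) (hx : 2 ≤ x) (hq : 1 ≤ q)
    (hn : x ^ 2 * q * (q + 2) ≤ n) :
    (Nat.card {S : Multiset (Finset (Fin n)) //
        Multiset.card S = q ∧ (∀ V ∈ S, V.card = x) ∧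
        ∀ V ∈ S, ∃ W ∈ S.erase V, 2 ≤ (V ∩ W).card} : ℝ) ≤
      2 * (n : ℝ) ^ (x * q - q) * ((x : ℝ) ^ 2 / (x.factorial : ℝ)) ^ q := by
  have h := CIM.main n x hx q hn
  have hfpos : (0:ℝ) < (x.factorial : ℝ) ^ q := by positivity
  have he : x * q - q = (x - 1) * q := by rw [Nat.sub_mul, one_mul]
  have hxq : ((x:ℝ) ^ 2 / (x.factorial : ℝ)) ^ q = (x:ℝ) ^ (2 * q) / (x.factorial : ℝ) ^ q := by
    rw [div_pow, ← pow_mul]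
  rw [he, hxq]
  have h2 : (Nat.card {S : Multiset (Finset (Fin n)) // CIM.Good n x q S} : ℝ) ≤
      (2 * (n : ℝ) ^ ((x - 1) * q) * (x : ℝ) ^ (2 * q)) / (x.factorial : ℝ) ^ q := by
    rw [le_div_iff₀ hfpos]; exact h
  calc (Nat.card {S : Multiset (Finset (Fin n)) //
        Multiset.card S = q ∧ (∀ V ∈ S, V.card = x) ∧
        ∀ V ∈ S, ∃ W ∈ S.erase V, 2 ≤ (V ∩ W).card} : ℝ)
      = (Nat.card {S : Multiset (Finset (Fin n)) // CIM.Good n x q S} : ℝ) := rfl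
    _ ≤ (2 * (n : ℝ) ^ ((x - 1) * q) * (x : ℝ) ^ (2 * q)) / (x.factorial : ℝ) ^ q := h2
    _ = 2 * (n : ℝ) ^ ((x - 1) * q) * ((x : ℝ) ^ (2 * q) / (x.factorial : ℝ) ^ q) := by ring
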